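/- For every W in H_h, the inner product (s_N W, W)_{H_h} is real and satisfies (s_N W, W)_{H_h} >= (1/3)*||W||_{H_h}^2. -/

import Mathlib

noncomputable section

/-- Second difference quotient in `x`, with output set to `0` at the boundary
indices `j = 0`, `k = 0`, `k = K` (and, harmlessly, off the mesh `k > K`). -/
def ddx (K : ℕ) (hx : ℝ) (W : ℕ → ℕ → ℂ) : ℕ → ℕ → ℂ := fun j k =>
  if j = 0 ∨ k = 0 ∨ K ≤ k then 0
  else (W (j + 1) k - 2 * W j k + W (j - 1) k) / (hx : ℂ) ^ 2

/-- Second difference quotient in `y`, with output set to `0` at the boundary. -/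
def ddy (K : ℕ) (hy : ℝ) (W : ℕ → ℕ → ℂ) : ℕ → ℕ → ℂ := fun j k =>
  if j = 0 ∨ k = 0 ∨ K ≤ k then 0
  else (W j (k + 1) - 2 * W j k + W j (k - 1)) / (hy : ℂ) ^ 2

/-- Numerov average in `x`: `s_{Nx} = I + (h_x^2/12) ∂_x ∂̄_x`. -/
def sNx (K : ℕ) (hx : ℝ) (W : ℕ → ℕ → ℂ) : ℕ → ℕ → ℂ := fun j k =>
  W j k + ((hx ^ 2 / 12 : ℝ) : ℂ) * ddx K hx W j k

/-- Numerov average in `y`: `s_{Ny} = I + (h_y^2/12) ∂_y ∂̄_y`. -/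
def sNy (K : ℕ) (hy : ℝ) (W : ℕ → ℕ → ℂ) : ℕ → ℕ → ℂ := fun j k =>
  W j k + ((hy ^ 2 / 12 : ℝ) : ℂ) * ddy K hy W j k

/-- The full Numerov average `s_N = I + (h_x^2/12) ∂_x ∂̄_x + (h_y^2/12) ∂_y ∂̄_y`. -/
def sN (K : ℕ) (hx hy : ℝ) (W : ℕ → ℕ → ℂ) : ℕ → ℕ → ℂ := fun j k =>
  W j k + ((hx ^ 2 / 12 : ℝ) : ℂ) * ddx K hx W j k + ((hy ^ 2 / 12 : ℝ) : ℂ) * ddy K hy W j k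

/-- The Numerov discretization `Δ_{hN} = s_{Ny} ∂_x ∂̄_x + s_{Nx} ∂_y ∂̄_y` of the Laplacian. -/
def deltaHN (K : ℕ) (hx hy : ℝ) (W : ℕ → ℕ → ℂ) : ℕ → ℕ → ℂ := fun j k =>
  sNy K hy (ddx K hx W) j k + sNx K hx (ddy K hy W) j k

/-- Membership in the Hilbert space `H_h` of mesh functions on the semi-infinite strip:
vanishing at `j = 0`, `k = 0`, `k = K`, and square-summable. -/
def memH (K : ℕ) (W : ℕ → ℕ → ℂ) : Prop :=
  (∀ k, W 0 k = 0) ∧ (∀ j, W j 0 = 0) ∧ (∀ j, W j K = 0) ∧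
    Summable fun j : ℕ => ∑ k ∈ Finset.Icc 1 (K - 1), ‖W j k‖ ^ 2

/-- The inner product `(U,W)_{H_h} = ∑_{j ≥ 1} ∑_{k=1}^{K-1} U_{j,k} conj(W_{j,k}) h_x h_y`. -/
def innH (K : ℕ) (hx hy : ℝ) (U W : ℕ → ℕ → ℂ) : ℂ :=
  ∑' j : ℕ, ∑ k ∈ Finset.Icc 1 (K - 1),
    U (j + 1) k * (starRingEnd ℂ) (W (j + 1) k) * ((hx * hy : ℝ) : ℂ)

/-- The norm `‖W‖_{H_h}`. -/
def nrmH (K : ℕ) (hx hy : ℝ) (W : ℕ → ℕ → ℂ) : ℝ :=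
  Real.sqrt (innH K hx hy W W).re

open Finset Complex

lemma mulconj (z : ℂ) : z * (starRingEnd ℂ) z = ((‖z‖^2 : ℝ) : ℂ) := by
  rw [Complex.mul_conj, Complex.normSq_eq_norm_sq]

lemma summable_mul_conj {f g : ℕ → ℂ} (hf : Summable fun j => ‖f j‖^2)
    (hg : Summable fun j => ‖g j‖^2) : Summable fun j => f j * (starRingEnd ℂ) (g j) := by
  apply Summable.of_norm
  apply Summable.of_nonneg_of_le (fun j => norm_nonneg _) (fun j => ?_)
      (((hf.add hg).mul_left (1/2)))
  have h1 : ‖f j * (starRingEnd ℂ) (g j)‖ = ‖f j‖ * ‖g j‖ := by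
    rw [norm_mul, RCLike.norm_conj]
  rw [h1]
  nlinarith [sq_nonneg (‖f j‖ - ‖g j‖), norm_nonneg (f j), norm_nonneg (g j)]

/-- 1-D infinite-direction quadratic form identity and bound. -/
lemma oneD (v : ℕ → ℂ) (h0 : v 0 = 0) (hs : Summable fun j => ‖v j‖ ^ 2) :
    ∃ S : ℝ, (∑' j : ℕ, (v (j+2) - 2 * v (j+1) + v j) * (starRingEnd ℂ) (v (j+1))) = (S : ℂ) ∧
      -(4 * ∑' j : ℕ, ‖v (j+1)‖ ^ 2) ≤ S := by
  have hs1 : Summable fun j => ‖v (j+1)‖ ^ 2 := (summable_nat_add_iff (f := fun j => ‖v j‖ ^ 2) 1).2 hs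
  have hs2 : Summable fun j => ‖v (j+2)‖ ^ 2 := (summable_nat_add_iff (f := fun j => ‖v j‖ ^ 2) 2).2 hs
  set c1 : ℕ → ℂ := fun j => v (j+2) * (starRingEnd ℂ) (v (j+1)) with hc1def
  set c2 : ℕ → ℂ := fun j => v j * (starRingEnd ℂ) (v (j+1)) with hc2def
  have hc1 : Summable c1 := summable_mul_conj hs2 hs1
  have hc2 : Summable c2 := summable_mul_conj hs hs1
  have hd : Summable fun j => ((‖v (j+1)‖^2 : ℝ) : ℂ) := by
    exact_mod_cast Complex.summable_ofReal.2 hs1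
  have key : ∀ j : ℕ, (v (j+2) - 2 * v (j+1) + v j) * (starRingEnd ℂ) (v (j+1))
      = c1 j + c2 j - 2 * ((‖v (j+1)‖^2 : ℝ) : ℂ) := by
    intro j
    have := mulconj (v (j+1))
    simp only [hc1def, hc2def]
    rw [← mulconj (v (j+1))]
    ring
  have hsplit : (∑' j : ℕ, (v (j+2) - 2 * v (j+1) + v j) * (starRingEnd ℂ) (v (j+1)))
      = (∑' j, c1 j) + (∑' j, c2 j) - 2 * ∑' j, ((‖v (j+1)‖^2 : ℝ) : ℂ) := by
    rw [tsum_congr key, Summable.tsum_sub (hc1.add hc2) (hd.mul_left 2), Summable.tsum_add hc1 hc2,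
      tsum_mul_left]
  -- shift c2
  have hshift : (∑' j, c2 j) = (starRingEnd ℂ) (∑' j, c1 j) := by
    have h2 : (∑' j, c2 j) = ∑' j, c2 (j+1) := by
      rw [Summable.tsum_eq_zero_add hc2]
      simp [hc2def, h0]
    rw [h2]
    rw [show (starRingEnd ℂ) (∑' j, c1 j) = ∑' j, (starRingEnd ℂ) (c1 j) from tsum_star]
    apply tsum_congr
    intro j
    simp only [hc1def, hc2def, map_mul, RingHomCompTriple.comp_apply, Complex.conj_conj,
      RingHom.id_apply]
    ring
  refine ⟨2 * (∑' j, c1 j).re - 2 * ∑' j, ‖v (j+1)‖^2, ?_, ?_⟩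
  · rw [hsplit, hshift, Complex.add_conj, ← Complex.ofReal_tsum]
    push_cast
    ring
  · have hre : (∑' j, c1 j).re = ∑' j, (c1 j).re := Complex.re_tsum hc1
    have hb1 : ∀ j, -((‖v (j+2)‖^2 + ‖v (j+1)‖^2)/2) ≤ (c1 j).re := by
      intro j
      have h1 : |(c1 j).re| ≤ ‖c1 j‖ := Complex.abs_re_le_norm (c1 j)
      have h2 : ‖c1 j‖ = ‖v (j+2)‖ * ‖v (j+1)‖ := by
        simp only [hc1def]; rw [norm_mul, RCLike.norm_conj]
      rw [abs_le] at h1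
      nlinarith [sq_nonneg (‖v (j+2)‖ - ‖v (j+1)‖), h1.1]
    have hsum1 : Summable fun j => (c1 j).re := by
      have := Complex.reCLM.summable hc1
      simpa using this
    have hle : ∑' j, -((‖v (j+2)‖^2 + ‖v (j+1)‖^2)/2) ≤ ∑' j, (c1 j).re :=
      Summable.tsum_le_tsum hb1 (((hs2.add hs1).div_const 2).neg) hsum1
    have htail : ∑' j, ‖v (j+2)‖^2 ≤ ∑' j, ‖v (j+1)‖^2 := by
      have h3 : ∑' j, ‖v (j+1)‖^2 = ‖v 1‖^2 + ∑' j, ‖v (j+2)‖^2 := by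
        rw [Summable.tsum_eq_zero_add hs1]
      nlinarith [sq_nonneg (‖v 1‖)]
    have hexp : ∑' j, -((‖v (j+2)‖^2 + ‖v (j+1)‖^2)/2)
        = -((∑' j, ‖v (j+2)‖^2) + ∑' j, ‖v (j+1)‖^2)/2 := by
      rw [tsum_neg, tsum_div_const, Summable.tsum_add hs2 hs1]
      ring
    rw [hre]
    rw [hexp] at hle
    linarith

/-- 1-D finite-direction quadratic form identity and bound. -/
lemma oneDfin (K : ℕ) (hK : 2 ≤ K) (v : ℕ → ℂ) (h0 : v 0 = 0) (hKK : v K = 0) :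
    ∃ S : ℝ, (∑ k ∈ Finset.Icc 1 (K-1), (v (k+1) - 2 * v k + v (k-1)) * (starRingEnd ℂ) (v k))
        = (S : ℂ) ∧
      |S| ≤ 4 * ∑ k ∈ Finset.Icc 1 (K-1), ‖v k‖ ^ 2 := by
  obtain ⟨m, rfl⟩ : ∃ m, K = m + 2 := ⟨K - 2, by omega⟩
  have hm1 : m + 2 - 1 = m + 1 := rfl
  have hIcc : ∀ (M : Type) (_ : AddCommMonoid M) (f : ℕ → M),
      ∑ k ∈ Finset.Icc 1 (m+2-1), f k = ∑ k ∈ Finset.range (m+1), f (1+k) := by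
    intro M _ f
    rw [hm1, ← Finset.Ico_add_one_right_eq_Icc, Finset.sum_Ico_eq_sum_range]
    simp
  set c1 : ℕ → ℂ := fun k => v (k+1) * (starRingEnd ℂ) (v k) with hc1def
  set g : ℕ → ℂ := fun k => v k * (starRingEnd ℂ) (v (k+1)) with hgdef
  have hg0 : g 0 = 0 := by simp [hgdef, h0]
  have hgn : g (m+1) = 0 := by
    simp only [hgdef]
    rw [show m+1+1 = m+2 from rfl, hKK]
    simp
  have hshift : (∑ k ∈ Finset.Icc 1 (m+2-1), v (k-1) * (starRingEnd ℂ) (v k))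
      = (starRingEnd ℂ) (∑ k ∈ Finset.Icc 1 (m+2-1), c1 k) := by
    rw [hIcc ℂ _ (fun k => v (k-1) * (starRingEnd ℂ) (v k)), hIcc ℂ _ c1, map_sum]
    have h1 : ∀ k ∈ Finset.range (m+1), v (1+k-1) * (starRingEnd ℂ) (v (1+k)) = g k := by
      intro k _; simp only [hgdef]
      rw [show 1+k-1 = k from by omega, show 1+k = k+1 from by omega]
    rw [Finset.sum_congr rfl h1]
    have h2 : ∀ k ∈ Finset.range (m+1), (starRingEnd ℂ) (c1 (1+k)) = g (k+1) := by
      intro k _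
      simp only [hc1def, hgdef, map_mul, Complex.conj_conj]
      rw [mul_comm, show 1+k = k+1 from by omega]
    rw [Finset.sum_congr rfl h2]
    have e1 : ∑ k ∈ Finset.range (m+1+1), g k = ∑ k ∈ Finset.range (m+1), g k + g (m+1) :=
      Finset.sum_range_succ g (m+1)
    have e2 : ∑ k ∈ Finset.range (m+1+1), g k = ∑ k ∈ Finset.range (m+1), g (k+1) + g 0 :=
      Finset.sum_range_succ' g (m+1)
    rw [hgn] at e1
    rw [hg0] at e2
    simp only [add_zero] at e1 e2
    rw [← e1, e2]
  have key : ∀ k, (v (k+1) - 2 * v k + v (k-1)) * (starRingEnd ℂ) (v k)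
      = c1 k + v (k-1) * (starRingEnd ℂ) (v k) - 2 * ((‖v k‖^2 : ℝ) : ℂ) := by
    intro k
    simp only [hc1def]
    rw [← mulconj (v k)]
    ring
  have hsplit : (∑ k ∈ Finset.Icc 1 (m+2-1), (v (k+1) - 2 * v k + v (k-1)) * (starRingEnd ℂ) (v k))
      = (∑ k ∈ Finset.Icc 1 (m+2-1), c1 k) + (starRingEnd ℂ) (∑ k ∈ Finset.Icc 1 (m+2-1), c1 k)
        - 2 * ((∑ k ∈ Finset.Icc 1 (m+2-1), ‖v k‖^2 : ℝ) : ℂ) := by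
    rw [Finset.sum_congr rfl (fun k _ => key k), Finset.sum_sub_distrib, Finset.sum_add_distrib,
      hshift, ← Finset.mul_sum]
    push_cast
    ring
  set Z := ∑ k ∈ Finset.Icc 1 (m+2-1), c1 k with hZ
  set D := ∑ k ∈ Finset.Icc 1 (m+2-1), ‖v k‖^2 with hD
  refine ⟨2 * Z.re - 2 * D, ?_, ?_⟩
  · rw [hsplit, Complex.add_conj]
    push_cast
    ring
  · have hre : Z.re = ∑ k ∈ Finset.Icc 1 (m+2-1), (c1 k).re := by
      rw [hZ, Complex.re_sum]
    have hb1 : ∀ k, |(c1 k).re| ≤ (‖v (k+1)‖^2 + ‖v k‖^2)/2 := by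
      intro k
      have h1 : |(c1 k).re| ≤ ‖c1 k‖ := Complex.abs_re_le_norm (c1 k)
      have h2 : ‖c1 k‖ = ‖v (k+1)‖ * ‖v k‖ := by
        simp only [hc1def]; rw [norm_mul, RCLike.norm_conj]
      nlinarith [sq_nonneg (‖v (k+1)‖ - ‖v k‖)]
    have habs : |Z.re| ≤ ((∑ k ∈ Finset.Icc 1 (m+2-1), ‖v (k+1)‖^2) + D)/2 := by
      rw [hre]
      calc |∑ k ∈ Finset.Icc 1 (m+2-1), (c1 k).re|
          ≤ ∑ k ∈ Finset.Icc 1 (m+2-1), |(c1 k).re| := Finset.abs_sum_le_sum_abs _ _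
        _ ≤ ∑ k ∈ Finset.Icc 1 (m+2-1), (‖v (k+1)‖^2 + ‖v k‖^2)/2 :=
            Finset.sum_le_sum (fun k _ => hb1 k)
        _ = ((∑ k ∈ Finset.Icc 1 (m+2-1), ‖v (k+1)‖^2) + D)/2 := by
            rw [hD, ← Finset.sum_add_distrib, ← Finset.sum_div]
    have htail : ∑ k ∈ Finset.Icc 1 (m+2-1), ‖v (k+1)‖^2 ≤ D := by
      rw [hD, hIcc ℝ _ (fun k => ‖v (k+1)‖^2), hIcc ℝ _ (fun k => ‖v k‖^2)]
      set d : ℕ → ℝ := fun k => ‖v (1+k)‖^2 with hd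
      have h1 : ∀ k ∈ Finset.range (m+1), ‖v (1+k+1)‖^2 = d (k+1) := by
        intro k _; rfl
      rw [Finset.sum_congr rfl h1]
      have e1 : ∑ k ∈ Finset.range (m+1+1), d k = ∑ k ∈ Finset.range (m+1), d k + d (m+1) :=
        Finset.sum_range_succ d (m+1)
      have e2 : ∑ k ∈ Finset.range (m+1+1), d k = ∑ k ∈ Finset.range (m+1), d (k+1) + d 0 :=
        Finset.sum_range_succ' d (m+1)
      have hdn : d (m+1) = 0 := by
        simp only [hd]; rw [show 1+(m+1) = m+2 from by omega, hKK]; simp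
      have hd0 : 0 ≤ d 0 := sq_nonneg _
      nlinarith
    have hDnn : 0 ≤ D := Finset.sum_nonneg (fun k _ => sq_nonneg _)
    rw [abs_le] at habs ⊢
    constructor <;> nlinarith [habs.1, habs.2]

/-- for every `W ∈ H_h`, `(s_N W, W)_{H_h}` is real and `≥ (1/3)‖W‖²`. -/
theorem stmt1 (K : ℕ) (hK : 2 ≤ K) (hx hy : ℝ) (hhx : 0 < hx) (hhy : 0 < hy)
    (W : ℕ → ℕ → ℂ) (hW : memH K W) :
    (innH K hx hy (sN K hx hy W) W).im = 0 ∧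
    1 / 3 * (innH K hx hy W W).re ≤ (innH K hx hy (sN K hx hy W) W).re := by
  classical
  obtain ⟨hW0, hWj0, hWjK, hWsum⟩ := hW
  set c : ℂ := ((hx * hy : ℝ) : ℂ) with hc
  have hkmem : ∀ k ∈ Finset.Icc 1 (K-1), k ≠ 0 ∧ ¬ K ≤ k := by
    intro k hk
    rw [Finset.mem_Icc] at hk
    omega
  have hsumk : ∀ k ∈ Finset.Icc 1 (K-1), Summable fun j => ‖W j k‖^2 := by
    intro k hk
    exact Summable.of_nonneg_of_le (fun j => sq_nonneg _)
      (fun j => Finset.single_le_sum (f := fun i => ‖W j i‖^2) (fun i _ => sq_nonneg _) hk) hWsum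
  have hsumk' : ∀ k, k ≤ K → Summable fun j => ‖W j k‖^2 := by
    intro k hk
    rcases eq_or_ne k 0 with rfl | h0
    · simpa [hWj0] using (summable_zero : Summable (fun _ : ℕ => (0:ℝ)))
    rcases eq_or_ne k K with rfl | hKk
    · simpa [hWjK] using (summable_zero : Summable (fun _ : ℕ => (0:ℝ)))
    exact hsumk k (by rw [Finset.mem_Icc]; omega)
  have hsumk1 : ∀ k, k ≤ K → Summable fun j => ‖W (j+1) k‖^2 := fun k hk =>
    (summable_nat_add_iff (f := fun j => ‖W j k‖^2) 1).2 (hsumk' k hk)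
  have hsumk2 : ∀ k, k ≤ K → Summable fun j => ‖W (j+2) k‖^2 := fun k hk =>
    (summable_nat_add_iff (f := fun j => ‖W j k‖^2) 2).2 (hsumk' k hk)
  have hkK : ∀ k ∈ Finset.Icc 1 (K-1), k ≤ K := by
    intro k hk; rw [Finset.mem_Icc] at hk; omega
  have hQ : Summable fun j => ∑ k ∈ Finset.Icc 1 (K-1), ‖W (j+1) k‖^2 :=
    (summable_nat_add_iff (f := fun j => ∑ k ∈ Finset.Icc 1 (K-1), ‖W j k‖^2) 1).2 hWsum
  -- unfolding lemmas
  have hddx : ∀ j, ∀ k ∈ Finset.Icc 1 (K-1),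
      ddx K hx W (j+1) k = (W (j+2) k - 2 * W (j+1) k + W j k) / (hx:ℂ)^2 := by
    intro j k hk
    obtain ⟨h1, h2⟩ := hkmem k hk
    simp only [ddx]
    rw [if_neg (by rintro (h | h | h) <;> [exact (Nat.succ_ne_zero j) h; exact h1 h; exact h2 h]),
      show j+1+1 = j+2 from by omega, show j+1-1 = j from by omega]
  have hddy : ∀ j, ∀ k ∈ Finset.Icc 1 (K-1),
      ddy K hy W (j+1) k = (W (j+1) (k+1) - 2 * W (j+1) k + W (j+1) (k-1)) / (hy:ℂ)^2 := by
    intro j k hk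
    obtain ⟨h1, h2⟩ := hkmem k hk
    simp only [ddy]
    rw [if_neg (by rintro (h | h | h) <;> [exact (Nat.succ_ne_zero j) h; exact h1 h; exact h2 h])]
  -- per-k summabilities of the complex pieces
  have hS0 : ∀ k ∈ Finset.Icc 1 (K-1),
      Summable fun j => W (j+1) k * (starRingEnd ℂ) (W (j+1) k) * c :=
    fun k hk => (summable_mul_conj (hsumk1 k (hkK k hk)) (hsumk1 k (hkK k hk))).mul_right c
  have hSnumx : ∀ k ∈ Finset.Icc 1 (K-1),
      Summable fun j => (W (j+2) k - 2 * W (j+1) k + W j k) * (starRingEnd ℂ) (W (j+1) k) := by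
    intro k hk
    have h1 := summable_mul_conj (hsumk2 k (hkK k hk)) (hsumk1 k (hkK k hk))
    have h2 := (summable_mul_conj (hsumk1 k (hkK k hk)) (hsumk1 k (hkK k hk))).mul_left 2
    have h3 := summable_mul_conj (hsumk' k (hkK k hk)) (hsumk1 k (hkK k hk))
    exact Summable.congr ((h1.sub h2).add h3) (fun j => by ring)
  have hSx : ∀ k ∈ Finset.Icc 1 (K-1),
      Summable fun j =>
        ((hx ^ 2 / 12 : ℝ) : ℂ) * ddx K hx W (j+1) k * (starRingEnd ℂ) (W (j+1) k) * c := by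
    intro k hk
    apply Summable.congr (((hSnumx k hk).mul_right
      (((hx ^ 2 / 12 : ℝ) : ℂ) * c / (hx:ℂ)^2)))
    intro j
    rw [hddx j k hk]
    ring
  have hSnumy : ∀ k ∈ Finset.Icc 1 (K-1),
      Summable fun j => (W (j+1) (k+1) - 2 * W (j+1) k + W (j+1) (k-1))
        * (starRingEnd ℂ) (W (j+1) k) := by
    intro k hk
    rw [Finset.mem_Icc] at hk
    have h1 := summable_mul_conj (hsumk1 (k+1) (by omega)) (hsumk1 k (by omega))
    have h2 := (summable_mul_conj (hsumk1 k (by omega)) (hsumk1 k (by omega))).mul_left 2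
    have h3 := summable_mul_conj (hsumk1 (k-1) (by omega)) (hsumk1 k (by omega))
    exact Summable.congr ((h1.sub h2).add h3) (fun j => by ring)
  have hSy : ∀ k ∈ Finset.Icc 1 (K-1),
      Summable fun j =>
        ((hy ^ 2 / 12 : ℝ) : ℂ) * ddy K hy W (j+1) k * (starRingEnd ℂ) (W (j+1) k) * c := by
    intro k hk
    apply Summable.congr (((hSnumy k hk).mul_right
      (((hy ^ 2 / 12 : ℝ) : ℂ) * c / (hy:ℂ)^2)))
    intro j
    rw [hddy j k hk]
    ring
  -- split innH (sN W) W
  set A0 : ℂ := ∑' j : ℕ, ∑ k ∈ Finset.Icc 1 (K-1),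
    W (j+1) k * (starRingEnd ℂ) (W (j+1) k) * c with hA0def
  set Ax : ℂ := ∑' j : ℕ, ∑ k ∈ Finset.Icc 1 (K-1),
    ((hx ^ 2 / 12 : ℝ) : ℂ) * ddx K hx W (j+1) k * (starRingEnd ℂ) (W (j+1) k) * c with hAxdef
  set Ay : ℂ := ∑' j : ℕ, ∑ k ∈ Finset.Icc 1 (K-1),
    ((hy ^ 2 / 12 : ℝ) : ℂ) * ddy K hy W (j+1) k * (starRingEnd ℂ) (W (j+1) k) * c with hAydef
  have hsplit : innH K hx hy (sN K hx hy W) W = A0 + Ax + Ay := by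
    rw [innH, hA0def, hAxdef, hAydef]
    have hptw : ∀ j : ℕ, (∑ k ∈ Finset.Icc 1 (K-1),
        sN K hx hy W (j+1) k * (starRingEnd ℂ) (W (j+1) k) * c)
        = (∑ k ∈ Finset.Icc 1 (K-1), W (j+1) k * (starRingEnd ℂ) (W (j+1) k) * c)
        + (∑ k ∈ Finset.Icc 1 (K-1),
            ((hx ^ 2 / 12 : ℝ) : ℂ) * ddx K hx W (j+1) k * (starRingEnd ℂ) (W (j+1) k) * c)
        + (∑ k ∈ Finset.Icc 1 (K-1),
            ((hy ^ 2 / 12 : ℝ) : ℂ) * ddy K hy W (j+1) k * (starRingEnd ℂ) (W (j+1) k) * c) := by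
      intro j
      rw [← Finset.sum_add_distrib, ← Finset.sum_add_distrib]
      apply Finset.sum_congr rfl
      intro k _
      simp only [sN]
      ring
    rw [tsum_congr hptw,
      Summable.tsum_add ((summable_sum hS0).add (summable_sum hSx)) (summable_sum hSy),
      Summable.tsum_add (summable_sum hS0) (summable_sum hSx)]
  -- evaluate A0
  set R0 : ℝ := (hx * hy) * ∑' j : ℕ, ∑ k ∈ Finset.Icc 1 (K-1), ‖W (j+1) k‖^2 with hR0def
  have hA0 : A0 = (R0 : ℂ) := by
    rw [hA0def]
    have hptw : ∀ j : ℕ, (∑ k ∈ Finset.Icc 1 (K-1),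
        W (j+1) k * (starRingEnd ℂ) (W (j+1) k) * c)
        = (((hx*hy) * ∑ k ∈ Finset.Icc 1 (K-1), ‖W (j+1) k‖^2 : ℝ) : ℂ) := by
      intro j
      rw [Finset.sum_congr rfl (fun k _ => by rw [mulconj (W (j+1) k)])]
      rw [← Finset.sum_mul, hc]
      push_cast
      ring
    rw [tsum_congr hptw, ← Complex.ofReal_tsum, hR0def, tsum_mul_left]
  have hinnWW : innH K hx hy W W = (R0 : ℂ) := hA0
  have hR0nn : 0 ≤ R0 := by
    rw [hR0def]
    apply mul_nonneg (by positivity)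
    apply tsum_nonneg
    intro j
    exact Finset.sum_nonneg fun k _ => sq_nonneg _
  -- evaluate Ax via oneD
  set V : ℕ → ℕ → ℂ := fun k j => if k ∈ Finset.Icc 1 (K-1) then W j k else 0 with hVdef
  have hV0 : ∀ k, V k 0 = 0 := by
    intro k
    by_cases hk : k ∈ Finset.Icc 1 (K-1) <;> simp [hVdef, hk, hW0 k]
  have hVsum : ∀ k, Summable fun j => ‖V k j‖^2 := by
    intro k
    by_cases hk : k ∈ Finset.Icc 1 (K-1)
    · exact Summable.congr (hsumk k hk) (fun j => by simp only [hVdef]; rw [if_pos hk])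
    · exact Summable.congr (summable_zero : Summable (fun _ : ℕ => (0:ℝ)))
        (fun j => by simp only [hVdef]; rw [if_neg hk]; simp)
  choose S hS1 hS2 using fun k => oneD (V k) (hV0 k) (hVsum k)
  have hVeq : ∀ k ∈ Finset.Icc 1 (K-1), ∀ j, V k j = W j k := by
    intro k hk j
    simp only [hVdef]
    rw [if_pos hk]
  have hS1' : ∀ k ∈ Finset.Icc 1 (K-1),
      (∑' j : ℕ, (W (j+2) k - 2 * W (j+1) k + W j k) * (starRingEnd ℂ) (W (j+1) k)) = (S k : ℂ) := by
    intro k hk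
    rw [← hS1 k]
    exact tsum_congr fun j => by rw [hVeq k hk, hVeq k hk, hVeq k hk]
  have hS2' : ∀ k ∈ Finset.Icc 1 (K-1),
      -(4 * ∑' j : ℕ, ‖W (j+1) k‖^2) ≤ S k := by
    intro k hk
    have := hS2 k
    have heq : (∑' j : ℕ, ‖V k (j+1)‖^2) = ∑' j : ℕ, ‖W (j+1) k‖^2 :=
      tsum_congr fun j => by rw [hVeq k hk]
    rwa [heq] at this
  set rx : ℝ := (hx*hy/12) * ∑ k ∈ Finset.Icc 1 (K-1), S k with hrxdef
  have hAx : Ax = (rx : ℂ) := by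
    rw [hAxdef, Summable.tsum_finsetSum hSx]
    have hterm : ∀ k ∈ Finset.Icc 1 (K-1),
        (∑' j : ℕ, ((hx ^ 2 / 12 : ℝ) : ℂ) * ddx K hx W (j+1) k
          * (starRingEnd ℂ) (W (j+1) k) * c)
        = (S k : ℂ) * (((hx ^ 2 / 12 : ℝ) : ℂ) * c / (hx:ℂ)^2) := by
      intro k hk
      have hptw : ∀ j : ℕ, ((hx ^ 2 / 12 : ℝ) : ℂ) * ddx K hx W (j+1) k
          * (starRingEnd ℂ) (W (j+1) k) * c
          = ((W (j+2) k - 2 * W (j+1) k + W j k) * (starRingEnd ℂ) (W (j+1) k))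
            * (((hx ^ 2 / 12 : ℝ) : ℂ) * c / (hx:ℂ)^2) := by
        intro j
        rw [hddx j k hk]
        ring
      rw [tsum_congr hptw, tsum_mul_right, hS1' k hk]
    rw [Finset.sum_congr rfl hterm, ← Finset.sum_mul, hrxdef, hc]
    have hxne : (hx:ℂ) ≠ 0 := Complex.ofReal_ne_zero.2 (ne_of_gt hhx)
    push_cast
    field_simp
  have hrx : -(1/3 * R0) ≤ rx := by
    have hsum : ∑ k ∈ Finset.Icc 1 (K-1), -(4 * ∑' j : ℕ, ‖W (j+1) k‖^2)
        ≤ ∑ k ∈ Finset.Icc 1 (K-1), S k := Finset.sum_le_sum hS2'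
    have hswap : ∑ k ∈ Finset.Icc 1 (K-1), ∑' j : ℕ, ‖W (j+1) k‖^2
        = ∑' j : ℕ, ∑ k ∈ Finset.Icc 1 (K-1), ‖W (j+1) k‖^2 :=
      (Summable.tsum_finsetSum fun k hk => hsumk1 k (hkK k hk)).symm
    have h1 : ∑ k ∈ Finset.Icc 1 (K-1), -(4 * ∑' j : ℕ, ‖W (j+1) k‖^2)
        = -(4 * ∑' j : ℕ, ∑ k ∈ Finset.Icc 1 (K-1), ‖W (j+1) k‖^2) := by
      rw [← hswap, Finset.sum_neg_distrib, Finset.mul_sum]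
    rw [h1] at hsum
    rw [hrxdef, hR0def]
    have h12 : (0:ℝ) < hx * hy / 12 := by positivity
    nlinarith [mul_le_mul_of_nonneg_left hsum (le_of_lt h12)]
  -- evaluate Ay via oneDfin
  choose T hT1 hT2 using fun j : ℕ =>
    oneDfin K hK (fun k => W (j+1) k) (hWj0 (j+1)) (hWjK (j+1))
  have hTabs : ∀ j, |T j| ≤ 4 * ∑ k ∈ Finset.Icc 1 (K-1), ‖W (j+1) k‖^2 := hT2
  have hTsum : Summable T := by
    apply Summable.of_norm
    apply Summable.of_nonneg_of_le (fun j => norm_nonneg _) (fun j => ?_) (hQ.mul_left 4)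
    rw [Real.norm_eq_abs]
    exact hTabs j
  set ry : ℝ := (hx*hy/12) * ∑' j : ℕ, T j with hrydef
  have hAy : Ay = (ry : ℂ) := by
    rw [hAydef]
    have hptw : ∀ j : ℕ, (∑ k ∈ Finset.Icc 1 (K-1),
        ((hy ^ 2 / 12 : ℝ) : ℂ) * ddy K hy W (j+1) k * (starRingEnd ℂ) (W (j+1) k) * c)
        = (T j : ℂ) * (((hy ^ 2 / 12 : ℝ) : ℂ) * c / (hy:ℂ)^2) := by
      intro j
      have hterm : ∀ k ∈ Finset.Icc 1 (K-1),
          ((hy ^ 2 / 12 : ℝ) : ℂ) * ddy K hy W (j+1) k * (starRingEnd ℂ) (W (j+1) k) * c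
          = ((W (j+1) (k+1) - 2 * W (j+1) k + W (j+1) (k-1)) * (starRingEnd ℂ) (W (j+1) k))
            * (((hy ^ 2 / 12 : ℝ) : ℂ) * c / (hy:ℂ)^2) := by
        intro k hk
        rw [hddy j k hk]
        ring
      rw [Finset.sum_congr rfl hterm, ← Finset.sum_mul, hT1 j]
    rw [tsum_congr hptw, tsum_mul_right, ← Complex.ofReal_tsum, hrydef, hc]
    have hyne : (hy:ℂ) ≠ 0 := Complex.ofReal_ne_zero.2 (ne_of_gt hhy)
    push_cast
    field_simp
  have hry : -(1/3 * R0) ≤ ry := by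
    have hle : ∀ j, -(4 * ∑ k ∈ Finset.Icc 1 (K-1), ‖W (j+1) k‖^2) ≤ T j := by
      intro j
      have := hTabs j
      rw [abs_le] at this
      linarith [this.1]
    have hsum : ∑' j : ℕ, -(4 * ∑ k ∈ Finset.Icc 1 (K-1), ‖W (j+1) k‖^2) ≤ ∑' j, T j :=
      Summable.tsum_le_tsum hle ((hQ.mul_left 4).neg) hTsum
    rw [tsum_neg, tsum_mul_left] at hsum
    rw [hrydef, hR0def]
    have h12 : (0:ℝ) < hx * hy / 12 := by positivity
    nlinarith [mul_le_mul_of_nonneg_left hsum (le_of_lt h12)]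
  -- conclude
  have hfin : innH K hx hy (sN K hx hy W) W = ((R0 + rx + ry : ℝ) : ℂ) := by
    rw [hsplit, hA0, hAx, hAy]
    push_cast
    ring
  constructor
  · rw [hfin]
    exact Complex.ofReal_im _
  · rw [hfin, hinnWW]
    simp only [Complex.ofReal_re]
    linarith
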